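/- Let p ≥ 1, let P be a Borel probability measure on ℝ^d with finite p-th moment, and let k > 0. Then the quasi-sure no-arbitrage condition NA(B_k(P)) holds: for every w ∈ ℝ^d, if ⟨w, x⟩ ≥ 0 for Q-almost every x ∈ ℝ^d for all Q ∈ B_k(P), then ⟨w, x⟩ = 0 for Q-almost every x for all Q ∈ B_k(P) (equivalently, w = 0). -/

import Mathlib

open MeasureTheory Filter
open scoped ENNReal

noncomputable section

abbrev Evec (d : ℕ) : Type := EuclideanSpace ℝ (Fin d)

def couplings {d : ℕ} (P Q : Measure (Evec d)) : Set (Measure (Evec d × Evec d)) :=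
  {π | IsProbabilityMeasure π ∧ π.map Prod.fst = P ∧ π.map Prod.snd = Q}

noncomputable def Wdist {d : ℕ} (p : ℝ) (P Q : Measure (Evec d)) : ℝ≥0∞ :=
  ⨅ π ∈ couplings P Q, (∫⁻ z, (‖z.1 - z.2‖₊ : ℝ≥0∞) ^ p ∂π) ^ (1 / p)

def wBall {d : ℕ} (p k : ℝ) (P : Measure (Evec d)) : Set (Measure (Evec d)) :=
  {Q | IsProbabilityMeasure Q ∧ (∫⁻ x, (‖x‖₊ : ℝ≥0∞) ^ p ∂Q) < ⊤ ∧ Wdist p P Q ≤ ENNReal.ofReal k}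

lemma max_rpow_le {a b : ℝ≥0∞} {p : ℝ} : (max a b) ^ p ≤ a ^ p + b ^ p := by
  rcases le_total a b with h | h
  · rw [max_eq_right h]; exact le_add_self
  · rw [max_eq_left h]; exact le_self_add

lemma add_rpow_le {a b : ℝ≥0∞} {p : ℝ} (hp : 0 ≤ p) :
    (a + b) ^ p ≤ (2 : ℝ≥0∞) ^ p * (a ^ p + b ^ p) := by
  have h1 : a + b ≤ 2 * max a b := by
    rw [two_mul]
    exact add_le_add (le_max_left a b) (le_max_right a b)
  calc (a + b) ^ p ≤ (2 * max a b) ^ p := ENNReal.rpow_le_rpow h1 hp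
    _ = (2 : ℝ≥0∞) ^ p * (max a b) ^ p := ENNReal.mul_rpow_of_nonneg _ _ hp
    _ ≤ (2 : ℝ≥0∞) ^ p * (a ^ p + b ^ p) := by
        exact mul_le_mul_right max_rpow_le _

/-- the quasi-sure no-arbitrage condition `NA(B_k(P))` holds. -/
theorem na_wasserstein_ball {d : ℕ} (p k : ℝ) (hp : 1 ≤ p) (hk : 0 < k)
    (P : Measure (Evec d)) [IsProbabilityMeasure P]
    (hmom : (∫⁻ x, (‖x‖₊ : ℝ≥0∞) ^ p ∂P) < ⊤)
    (w : Evec d)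
    (hpos : ∀ Q ∈ wBall p k P, ∀ᵐ x ∂Q, 0 ≤ (inner ℝ w x : ℝ)) :
    (∀ Q ∈ wBall p k P, ∀ᵐ x ∂Q, (inner ℝ w x : ℝ) = 0) ∧ w = 0 := by
  have hp0 : (0:ℝ) < p := lt_of_lt_of_le one_pos hp
  have hmeas : Measurable (fun x : Evec d => (‖x‖₊ : ℝ≥0∞) ^ p) :=
    measurable_nnnorm.coe_nnreal_ennreal.pow_const p
  have hw : w = 0 := by
    by_contra hw0
    -- the cost of moving mass to `-w`
    set C : ℝ≥0∞ := ∫⁻ x, (‖x + w‖₊ : ℝ≥0∞) ^ p ∂P with hCdef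
    have hwfin : ((‖w‖₊ : ℝ≥0∞)) ^ p < ⊤ :=
      ENNReal.rpow_lt_top_of_nonneg hp0.le ENNReal.coe_ne_top
    have hCfin : C < ⊤ := by
      have hb : ∀ x : Evec d, (‖x + w‖₊ : ℝ≥0∞) ^ p ≤
          (2 : ℝ≥0∞) ^ p * ((‖x‖₊ : ℝ≥0∞) ^ p + (‖w‖₊ : ℝ≥0∞) ^ p) := by
        intro x
        refine le_trans ?_ (add_rpow_le hp0.le)
        refine ENNReal.rpow_le_rpow ?_ hp0.le
        exact_mod_cast nnnorm_add_le x w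
      calc C ≤ ∫⁻ x, (2 : ℝ≥0∞) ^ p * ((‖x‖₊ : ℝ≥0∞) ^ p + (‖w‖₊ : ℝ≥0∞) ^ p) ∂P :=
            lintegral_mono hb
        _ = (2 : ℝ≥0∞) ^ p * ((∫⁻ x, (‖x‖₊ : ℝ≥0∞) ^ p ∂P) + (‖w‖₊ : ℝ≥0∞) ^ p) := by
            rw [lintegral_const_mul (f := fun x : Evec d => (‖x‖₊ : ℝ≥0∞) ^ p + (‖w‖₊ : ℝ≥0∞) ^ p) _
              (hmeas.add measurable_const),
              lintegral_add_right _ measurable_const, lintegral_const, measure_univ, mul_one]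
        _ < ⊤ := by
            refine ENNReal.mul_lt_top ?_ ?_
            · exact ENNReal.rpow_lt_top_of_nonneg hp0.le (by norm_num)
            · exact ENNReal.add_lt_top.mpr ⟨hmom, hwfin⟩
    set lam : ℝ≥0∞ := min 1 ((ENNReal.ofReal k) ^ p / (C + 1)) with hlamdef
    have hlam_pos : 0 < lam := by
      refine lt_min one_pos ?_
      refine ENNReal.div_pos ?_ ?_
      · exact (ENNReal.rpow_pos (ENNReal.ofReal_pos.mpr hk) ENNReal.ofReal_ne_top).ne'
      · exact (ENNReal.add_lt_top.mpr ⟨hCfin, ENNReal.one_lt_top⟩).ne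
    have hlam_le : lam ≤ 1 := min_le_left _ _
    have hlam_ne_top : lam ≠ ⊤ := (lt_of_le_of_lt hlam_le ENNReal.one_lt_top).ne
    set Q : Measure (Evec d) := (1 - lam) • P + lam • Measure.dirac (-w) with hQdef
    have hQuniv : Q Set.univ = 1 := by
      simp only [hQdef, Measure.coe_add, Pi.add_apply, Measure.smul_apply, smul_eq_mul,
        measure_univ, mul_one]
      exact tsub_add_cancel_of_le hlam_le
    have hQprob : IsProbabilityMeasure Q := ⟨hQuniv⟩
    have hQmom : (∫⁻ x, (‖x‖₊ : ℝ≥0∞) ^ p ∂Q) < ⊤ := by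
      rw [hQdef, lintegral_add_measure, lintegral_smul_measure, lintegral_smul_measure,
        lintegral_dirac' _ hmeas]
      refine ENNReal.add_lt_top.mpr ⟨?_, ?_⟩
      · refine ENNReal.mul_lt_top ?_ hmom
        exact lt_of_le_of_lt tsub_le_self ENNReal.one_lt_top
      · refine ENNReal.mul_lt_top (lt_of_le_of_lt hlam_le ENNReal.one_lt_top) ?_
        simpa using hwfin
    -- construct a coupling
    have hdiag : Measurable (fun x : Evec d => (x, x)) := measurable_id.prodMk measurable_id
    have hg : Measurable (fun x : Evec d => (x, -w)) := measurable_id.prodMk measurable_const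
    set π : Measure (Evec d × Evec d) :=
      (1 - lam) • P.map (fun x => (x, x)) + lam • P.map (fun x => (x, -w)) with hπdef
    have hπfst : π.map Prod.fst = P := by
      rw [hπdef, Measure.map_add _ _ measurable_fst, Measure.map_smul, Measure.map_smul,
        Measure.map_map measurable_fst hdiag, Measure.map_map measurable_fst hg]
      have h1 : (Prod.fst ∘ fun x : Evec d => (x, x)) = id := rfl
      have h2 : (Prod.fst ∘ fun x : Evec d => (x, -w)) = id := rfl
      rw [h1, h2, Measure.map_id, ← add_smul, tsub_add_cancel_of_le hlam_le, one_smul]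
    have hπsnd : π.map Prod.snd = Q := by
      rw [hπdef, Measure.map_add _ _ measurable_snd, Measure.map_smul, Measure.map_smul,
        Measure.map_map measurable_snd hdiag, Measure.map_map measurable_snd hg]
      have h1 : (Prod.snd ∘ fun x : Evec d => (x, x)) = id := rfl
      have h2 : (Prod.snd ∘ fun x : Evec d => (x, -w)) = (fun _ => -w) := rfl
      rw [h1, h2, Measure.map_id, Measure.map_const, measure_univ, one_smul, hQdef]
    have hπprob : IsProbabilityMeasure π := by
      constructor
      have := hπfst
      calc π Set.univ = (π.map Prod.fst) Set.univ := by
            rw [Measure.map_apply measurable_fst MeasurableSet.univ]; rfl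
        _ = 1 := by rw [hπfst, measure_univ]
    have hcostmeas : Measurable (fun z : Evec d × Evec d => (‖z.1 - z.2‖₊ : ℝ≥0∞) ^ p) :=
      ((measurable_fst.sub measurable_snd).nnnorm.coe_nnreal_ennreal).pow_const p
    have hcost : (∫⁻ z, (‖z.1 - z.2‖₊ : ℝ≥0∞) ^ p ∂π) = lam * C := by
      rw [hπdef, lintegral_add_measure, lintegral_smul_measure, lintegral_smul_measure,
        lintegral_map hcostmeas hdiag, lintegral_map hcostmeas hg]
      have h1 : (∫⁻ x : Evec d, (‖x - x‖₊ : ℝ≥0∞) ^ p ∂P) = 0 := by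
        simp [ENNReal.zero_rpow_of_pos hp0]
      have h2 : (∫⁻ x : Evec d, (‖x - -w‖₊ : ℝ≥0∞) ^ p ∂P) = C := by
        simp only [sub_neg_eq_add, hCdef]
      rw [h1, h2, smul_zero, zero_add, smul_eq_mul]
    have hW : Wdist p P Q ≤ ENNReal.ofReal k := by
      have hπmem : π ∈ couplings P Q := ⟨hπprob, hπfst, hπsnd⟩
      have hle : Wdist p P Q ≤ (∫⁻ z, (‖z.1 - z.2‖₊ : ℝ≥0∞) ^ p ∂π) ^ (1 / p) := by
        exact iInf₂_le π hπmem
      refine hle.trans ?_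
      rw [hcost]
      have hlamC : lam * C ≤ (ENNReal.ofReal k) ^ p := by
        calc lam * C ≤ ((ENNReal.ofReal k) ^ p / (C + 1)) * (C + 1) := by
              exact mul_le_mul' (min_le_right _ _) (le_add_right le_rfl)
          _ = (ENNReal.ofReal k) ^ p := by
              rw [ENNReal.div_mul_cancel]
              · simp
              · exact (ENNReal.add_lt_top.mpr ⟨hCfin, ENNReal.one_lt_top⟩).ne
      calc (lam * C) ^ (1 / p) ≤ ((ENNReal.ofReal k) ^ p) ^ (1 / p) :=
            ENNReal.rpow_le_rpow hlamC (by positivity)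
        _ = ENNReal.ofReal k := by
            rw [← ENNReal.rpow_mul, mul_one_div_cancel hp0.ne', ENNReal.rpow_one]
    have hQball : Q ∈ wBall p k P := ⟨hQprob, hQmom, hW⟩
    have hae := hpos Q hQball
    rw [ae_iff] at hae
    have hmem : -w ∈ {x : Evec d | ¬ (0:ℝ) ≤ (inner ℝ w x : ℝ)} := by
      simp only [Set.mem_setOf_eq, not_le, inner_neg_right]
      rw [neg_lt_zero, real_inner_self_eq_norm_sq]
      exact pow_pos (norm_pos_iff.mpr hw0) 2
    have hdirac : Measure.dirac (-w) {x : Evec d | ¬ (0:ℝ) ≤ (inner ℝ w x : ℝ)} = 1 := by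
      rw [Measure.dirac_apply, Set.indicator_of_mem hmem, Pi.one_apply]
    have : lam * Measure.dirac (-w) {x : Evec d | ¬ (0:ℝ) ≤ (inner ℝ w x : ℝ)} = 0 := by
      have h := hae
      rw [hQdef] at h
      simp only [Measure.coe_add, Pi.add_apply, Measure.smul_apply, smul_eq_mul] at h
      exact (add_eq_zero.mp h).2
    rw [hdirac, mul_one] at this
    exact hlam_pos.ne' this
  refine ⟨?_, hw⟩
  intro Q _
  filter_upwards with x
  simp [hw]
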